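/- arXiv:2111.04630 — 4 statements merged into one kernel-verified Lean document; each statement's English description precedes it below -/
import Mathlib

section
/- Let $a,c\in[0,\infty)$, $T\in\mathbb{R}$, $t_0\in(-\infty,T)$, and let $x\colon[t_0,T]\to[0,\infty)$ and $\delta\colon[t_0,T]\to[t_0,T]$ be measurable functions such that for all $t\in[t_0,T]$ it holds that $\delta(t)\le t$ and $x(t)\le a+\int_{t_0}^t c\,x(\delta(s))\,ds<\infty$. Then for all $t\in[t_0,T]$ it holds that $x(t)\le a e^{c(t-t_0)}$. -/
open MeasureTheory Set

private lemma poly_integral (t₀ t c : ℝ) (k : ℕ) :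
    ∫ s in t₀..t, c * ((c * (s - t₀))^k / k.factorial) =
      (c * (t - t₀))^(k+1) / (k+1).factorial := by
  have : ∀ s, c * ((c * (s - t₀))^k / k.factorial) =
      (c^(k+1) / k.factorial) * (s - t₀)^k := by
    intro s; rw [mul_pow]; ring
  simp_rw [this]
  rw [intervalIntegral.integral_const_mul,
    intervalIntegral.integral_comp_sub_right (fun u => u^k) t₀, integral_pow,
    Nat.factorial_succ, mul_pow]
  have h1 : (k:ℝ) + 1 ≠ 0 := by positivity
  have h2 : (k.factorial:ℝ) ≠ 0 := Nat.cast_ne_zero.2 k.factorial_ne_zero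
  push_cast
  field_simp
  ring_nf

set_option maxHeartbeats 1000000 in
/-- Gronwall's lemma with a delayed time argument `δ s ≤ s`. -/
theorem stmt_0 (a c t₀ T : ℝ) (ha : 0 ≤ a) (hc : 0 ≤ c) (ht₀T : t₀ < T)
    (x δ : ℝ → ℝ)
    (hx_meas : Measurable ((Set.Icc t₀ T).restrict x))
    (hδ_meas : Measurable ((Set.Icc t₀ T).restrict δ))
    (hx_nonneg : ∀ t ∈ Set.Icc t₀ T, 0 ≤ x t)
    (hδ_mem : ∀ t ∈ Set.Icc t₀ T, δ t ∈ Set.Icc t₀ T)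
    (hδ_le : ∀ t ∈ Set.Icc t₀ T, δ t ≤ t)
    (h_int : ∀ t ∈ Set.Icc t₀ T,
      IntegrableOn (fun s => c * x (δ s)) (Set.Icc t₀ t) volume)
    (h_bound : ∀ t ∈ Set.Icc t₀ T,
      x t ≤ a + ∫ s in t₀..t, c * x (δ s)) :
    ∀ t ∈ Set.Icc t₀ T, x t ≤ a * Real.exp (c * (t - t₀)) := by
  have hTmem : T ∈ Icc t₀ T := ⟨le_of_lt ht₀T, le_refl T⟩
  have hnn : ∀ s ∈ Icc t₀ T, 0 ≤ c * x (δ s) := fun s hs =>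
    mul_nonneg hc (hx_nonneg _ (hδ_mem s hs))
  -- interval integrability
  have hII : ∀ t ∈ Icc t₀ T, IntervalIntegrable (fun s => c * x (δ s)) volume t₀ t := by
    intro t ht
    have := (h_int t ht)
    rw [← Set.uIcc_of_le ht.1] at this
    exact this.intervalIntegrable
  set M : ℝ := a + ∫ s in t₀..T, c * x (δ s) with hM
  have hM0 : 0 ≤ M := by
    have : 0 ≤ ∫ s in t₀..T, c * x (δ s) :=
      intervalIntegral.integral_nonneg (le_of_lt ht₀T) (fun u hu => hnn u hu)
    positivity
  have hxM : ∀ t ∈ Icc t₀ T, x t ≤ M := by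
    intro t ht
    refine (h_bound t ht).trans (add_le_add (le_refl a) ?_)
    refine intervalIntegral.integral_mono_interval (le_refl t₀) ht.1 ht.2 ?_ (hII T hTmem)
    filter_upwards [ae_restrict_mem measurableSet_Ioc] with s hs
    exact hnn s ⟨le_of_lt hs.1, hs.2⟩
  -- the polynomial terms
  let P : ℕ → ℝ → ℝ := fun k t => (c * (t - t₀))^k / k.factorial
  have hP : ∀ k t, P k t = (c * (t - t₀))^k / k.factorial := fun k t => rfl
  have hPcont' : ∀ k, Continuous (P k) := by
    intro k
    exact ((continuous_const.mul (continuous_id.sub continuous_const)).pow k).div_const _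
  have hPcont : ∀ k, Continuous (fun s => c * P k s) := fun k =>
    continuous_const.mul (hPcont' k)
  have hPmono : ∀ k, ∀ u v : ℝ, t₀ ≤ u → u ≤ v → P k u ≤ P k v := by
    intro k u v hu huv
    have h1 : 0 ≤ c * (u - t₀) := mul_nonneg hc (by linarith)
    have h2 : c * (u - t₀) ≤ c * (v - t₀) := by
      apply mul_le_mul_of_nonneg_left (by linarith) hc
    exact div_le_div_of_nonneg_right (pow_le_pow_left₀ h1 h2 k)
      (by positivity) |>.trans_eq rfl
  -- key induction
  have key : ∀ n : ℕ, ∀ t ∈ Icc t₀ T,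
      x t ≤ a * ∑ k ∈ Finset.range n, P k t + M * P n t := by
    intro n
    induction n with
    | zero =>
      intro t ht
      simp only [Finset.range_zero, Finset.sum_empty, mul_zero, zero_add, hP,
        pow_zero, Nat.factorial_zero, Nat.cast_one, div_one, mul_one, P]
      exact hxM t ht
    | succ n ih =>
      intro t ht
      refine (h_bound t ht).trans ?_
      have hstep : ∫ s in t₀..t, c * x (δ s) ≤
          ∫ s in t₀..t, c * (a * ∑ k ∈ Finset.range n, P k s + M * P n s) := by
        refine intervalIntegral.integral_mono_on ht.1 (hII t ht)
          ((continuous_const.mul ((continuous_const.mul (continuous_finset_sum _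
            (fun k _ => hPcont' k))).add
            (continuous_const.mul (hPcont' n)))).intervalIntegrable t₀ t) ?_
        intro s hs
        have hsT : s ∈ Icc t₀ T := ⟨hs.1, hs.2.trans ht.2⟩
        have hδs := hδ_mem s hsT
        have hxδ := ih (δ s) hδs
        have hmono : a * ∑ k ∈ Finset.range n, P k (δ s) + M * P n (δ s) ≤
            a * ∑ k ∈ Finset.range n, P k s + M * P n s := by
          gcongr with k _
          · exact hPmono k (δ s) s hδs.1 (hδ_le s hsT)
          · exact hPmono n (δ s) s hδs.1 (hδ_le s hsT)
        exact mul_le_mul_of_nonneg_left (hxδ.trans hmono) hc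
      refine (add_le_add (le_refl a) hstep).trans ?_
      have hlin : ∀ s, c * (a * ∑ k ∈ Finset.range n, P k s + M * P n s) =
          a * ∑ k ∈ Finset.range n, c * P k s + M * (c * P n s) := by
        intro s
        rw [show c * (a * ∑ k ∈ Finset.range n, P k s + M * P n s) =
            a * (c * ∑ k ∈ Finset.range n, P k s) + M * (c * P n s) from by ring,
          Finset.mul_sum]
      simp_rw [hlin]
      rw [intervalIntegral.integral_add (f := fun s => a * ∑ k ∈ Finset.range n, c * P k s)
        (g := fun s => M * (c * P n s))
        ((continuous_const.mul (continuous_finset_sum _ (fun k _ => hPcont k))).intervalIntegrable t₀ t)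
        ((continuous_const.mul (hPcont n)).intervalIntegrable t₀ t),
        intervalIntegral.integral_const_mul, intervalIntegral.integral_const_mul,
        intervalIntegral.integral_finset_sum (fun k _ => (hPcont k).intervalIntegrable t₀ t)]
      have hPint : ∀ k, (∫ s in t₀..t, c * P k s) = P (k+1) t := by
        intro k; simp only [hP]; exact poly_integral t₀ t c k
      simp_rw [hPint]
      have hsum : ∑ k ∈ Finset.range (n+1), P k t =
          ∑ k ∈ Finset.range n, P (k+1) t + P 0 t := Finset.sum_range_succ' _ n
      have hP0 : P 0 t = 1 := by simp [hP]
      have heq : a * ∑ k ∈ Finset.range (n+1), P k t =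
          a * ∑ k ∈ Finset.range n, P (k+1) t + a := by rw [hsum, hP0]; ring
      rw [heq]
      linarith
  -- take the limit
  intro t ht
  set y := c * (t - t₀) with hy
  have h1 : Filter.Tendsto (fun n => a * ∑ k ∈ Finset.range n, P k t)
      Filter.atTop (nhds (a * Real.exp y)) := by
    have := (NormedSpace.expSeries_div_hasSum_exp y).tendsto_sum_nat
    rw [← Real.exp_eq_exp_ℝ] at this
    exact this.const_mul a
  have h2 : Filter.Tendsto (fun n => M * P n t) Filter.atTop (nhds 0) := by
    have := (FloorSemiring.tendsto_pow_div_factorial_atTop (K := ℝ) y).const_mul M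
    rw [mul_zero] at this
    exact this
  have h3 : Filter.Tendsto (fun n => a * ∑ k ∈ Finset.range n, P k t + M * P n t)
      Filter.atTop (nhds (a * Real.exp y)) := by
    have := h1.add h2
    rwa [add_zero] at this
  exact ge_of_tendsto' h3 (fun n => key n t ht)
end

section
/- Let $c\in[0,\infty)$, $p\in[1,\infty)$, $T\in\mathbb{R}$, $t_0\in(-\infty,T)$, and let $a,x\colon[t_0,T]\to[0,\infty)$ and $\delta\colon[t_0,T]\to[t_0,T]$ be measurable functions satisfying for all $t\in[t_0,T]$ that $\delta(t)\le t$ and $x(t)\le a(t)+\bigl(\int_{t_0}^t (c\,x(\delta(s)))^p\,ds\bigr)^{1/p}<\infty$. Then for all $t\in[t_0,T]$ it holds that $x(t)\le 2^{1-1/p}\,\bigl[\sup_{s\in[t_0,t]}a(s)\bigr]\,\exp\bigl(\tfrac{2^{p-1}c^p(t-t_0)}{p}\bigr)$. -/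
open MeasureTheory Set

private lemma aux_add_rpow {u v p : ℝ} (hu : 0 ≤ u) (hv : 0 ≤ v) (hp : 1 ≤ p) :
    (u + v) ^ p ≤ 2 ^ (p - 1) * (u ^ p + v ^ p) := by
  lift u to NNReal using hu
  lift v to NNReal using hv
  exact_mod_cast NNReal.rpow_add_le_mul_rpow_add_rpow u v hp

/-- An `L^p`-type Gronwall inequality with a delayed time argument `δ s ≤ s`. -/
theorem stmt_1 (c p t₀ T : ℝ) (hc : 0 ≤ c) (hp : 1 ≤ p) (ht₀T : t₀ < T)
    (a x δ : ℝ → ℝ)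
    (ha_meas : Measurable ((Set.Icc t₀ T).restrict a))
    (hx_meas : Measurable ((Set.Icc t₀ T).restrict x))
    (hδ_meas : Measurable ((Set.Icc t₀ T).restrict δ))
    (ha_nonneg : ∀ t ∈ Set.Icc t₀ T, 0 ≤ a t)
    (hx_nonneg : ∀ t ∈ Set.Icc t₀ T, 0 ≤ x t)
    (hδ_mem : ∀ t ∈ Set.Icc t₀ T, δ t ∈ Set.Icc t₀ T)
    (hδ_le : ∀ t ∈ Set.Icc t₀ T, δ t ≤ t)
    (h_int : ∀ t ∈ Set.Icc t₀ T,
      IntegrableOn (fun s => (c * x (δ s)) ^ p) (Set.Icc t₀ t) volume)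
    (h_bound : ∀ t ∈ Set.Icc t₀ T,
      x t ≤ a t + (∫ s in t₀..t, (c * x (δ s)) ^ p) ^ (1 / p)) :
    ∀ t ∈ Set.Icc t₀ T, ∀ M : ℝ, (∀ s ∈ Set.Icc t₀ t, a s ≤ M) →
      x t ≤ 2 ^ (1 - 1 / p) * M * Real.exp (2 ^ (p - 1) * c ^ p * (t - t₀) / p) := by
  intro t ht M hM
  have hp0 : (0:ℝ) < p := lt_of_lt_of_le one_pos hp
  have htT : Icc t₀ t ⊆ Icc t₀ T := Icc_subset_Icc le_rfl ht.2
  have ht₀ : t₀ ∈ Icc t₀ T := ⟨le_rfl, le_of_lt ht₀T⟩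
  have htt : t ∈ Icc t₀ t := ⟨ht.1, le_rfl⟩
  have hM0 : 0 ≤ M := le_trans (ha_nonneg t₀ ht₀) (hM t₀ ⟨le_rfl, ht.1⟩)
  set g : ℝ → ℝ := fun s => (c * x (δ s)) ^ p with hgdef
  set F : ℝ → ℝ := fun u => ∫ s in t₀..u, g s with hFdef
  have hg_nonneg : ∀ s ∈ Icc t₀ T, 0 ≤ g s := fun s hs =>
    Real.rpow_nonneg (mul_nonneg hc (hx_nonneg _ (hδ_mem s hs))) p
  have hgi : ∀ u ∈ Icc t₀ T, IntervalIntegrable g volume t₀ u := fun u hu =>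
    (intervalIntegrable_iff_integrableOn_Icc_of_le hu.1).mpr (h_int u hu)
  have hF_mono : ∀ u ∈ Icc t₀ T, ∀ v ∈ Icc t₀ T, u ≤ v → F u ≤ F v := by
    intro u hu v hv huv
    have hguv : IntervalIntegrable g volume u v := by
      refine (hgi v hv).mono_set ?_
      rw [uIcc_of_le huv, uIcc_of_le (hu.1.trans huv)]
      exact Icc_subset_Icc hu.1 le_rfl
    have h1 : F u + ∫ s in u..v, g s = F v :=
      intervalIntegral.integral_add_adjacent_intervals (hgi u hu) hguv
    have h2 : 0 ≤ ∫ s in u..v, g s :=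
      intervalIntegral.integral_nonneg huv
        (fun z hz => hg_nonneg z ⟨hu.1.trans hz.1, hz.2.trans hv.2⟩)
    linarith
  have hFt0 : F t₀ = 0 := intervalIntegral.integral_same
  have hF_nonneg : ∀ u ∈ Icc t₀ T, 0 ≤ F u := by
    intro u hu
    have := hF_mono t₀ ht₀ u hu hu.1
    linarith
  set B := (2:ℝ) ^ (p - 1) * c ^ p with hBdef
  have hB : 0 ≤ B := mul_nonneg (Real.rpow_nonneg (by norm_num) _) (Real.rpow_nonneg hc _)
  set G : ℝ → ℝ := fun s => M ^ p + F s with hGdef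
  have hMp : (0:ℝ) ≤ M ^ p := Real.rpow_nonneg hM0 p
  have hG_mono : MonotoneOn G (Icc t₀ T) := fun u hu v hv huv =>
    add_le_add_right (hF_mono u hu v hv huv) _
  have hG_inton : IntegrableOn G (Icc t₀ T) volume :=
    hG_mono.integrableOn_isCompact isCompact_Icc
  have hG_int : ∀ u ∈ Icc t₀ T, IntervalIntegrable G volume t₀ u := by
    intro u hu
    rw [intervalIntegrable_iff_integrableOn_Icc_of_le hu.1]
    exact hG_inton.mono_set (Icc_subset_Icc le_rfl hu.2)
  -- the key pointwise bound
  have hkey : ∀ s ∈ Icc t₀ t, g s ≤ B * G s := by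
    intro s hs
    have hsT : s ∈ Icc t₀ T := htT hs
    have hδs : δ s ∈ Icc t₀ T := hδ_mem s hsT
    have hδst : δ s ∈ Icc t₀ t := ⟨hδs.1, (hδ_le s hsT).trans hs.2⟩
    have hx0 : 0 ≤ x (δ s) := hx_nonneg _ hδs
    have hF0 : 0 ≤ F s := hF_nonneg s hsT
    have h1 : x (δ s) ≤ M + F s ^ (1/p) := by
      refine le_trans (h_bound (δ s) hδs) (add_le_add (hM _ hδst) ?_)
      exact Real.rpow_le_rpow (hF_nonneg _ hδs)
        (hF_mono _ hδs s hsT (hδ_le s hsT)) (by positivity)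
    have h2 : x (δ s) ^ p ≤ 2 ^ (p-1) * (M ^ p + F s) := by
      calc x (δ s) ^ p ≤ (M + F s ^ (1/p)) ^ p :=
            Real.rpow_le_rpow hx0 h1 (le_of_lt hp0)
        _ ≤ 2 ^ (p-1) * (M ^ p + (F s ^ (1/p)) ^ p) :=
            aux_add_rpow hM0 (Real.rpow_nonneg hF0 _) hp
        _ = 2 ^ (p-1) * (M ^ p + F s) := by
            rw [← Real.rpow_mul hF0, one_div_mul_cancel hp0.ne', Real.rpow_one]
    calc g s = c ^ p * x (δ s) ^ p := Real.mul_rpow hc hx0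
      _ ≤ c ^ p * (2 ^ (p-1) * (M ^ p + F s)) :=
          mul_le_mul_of_nonneg_left h2 (Real.rpow_nonneg hc p)
      _ = B * G s := by rw [hBdef, hGdef]; ring
  have hFle : ∀ u ∈ Icc t₀ t, F u ≤ B * ∫ s in t₀..u, G s := by
    intro u hu
    have huT : u ∈ Icc t₀ T := htT hu
    rw [← intervalIntegral.integral_const_mul]
    exact intervalIntegral.integral_mono_on hu.1 (hgi u huT)
      ((hG_int u huT).const_mul B)
      (fun s hs => hkey s ⟨hs.1, hs.2.trans hu.2⟩)
  -- main induction
  have main : ∀ n : ℕ, ∀ u ∈ Icc t₀ t,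
      G u ≤ M ^ p * (∑ k ∈ Finset.range n, (B * (u - t₀)) ^ k / (k.factorial : ℝ))
        + G t * ((B * (u - t₀)) ^ n / (n.factorial : ℝ)) := by
    intro n
    induction n with
    | zero =>
      intro u hu
      simp only [Finset.range_zero, Finset.sum_empty, mul_zero, zero_add, pow_zero,
        Nat.factorial_zero, Nat.cast_one, div_one, mul_one]
      exact hG_mono (htT hu) (htT htt) hu.2
    | succ n ih =>
      intro u hu
      have huT : u ∈ Icc t₀ T := htT hu
      have hu0 : (0:ℝ) ≤ u - t₀ := sub_nonneg.2 hu.1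
      have hIk : ∀ k : ℕ, (∫ s in t₀..u, (B * (s - t₀)) ^ k / (k.factorial:ℝ))
          = B ^ k * (u - t₀) ^ (k+1) / (((k:ℝ)+1) * (k.factorial:ℝ)) := by
        intro k
        rw [intervalIntegral.integral_div]
        simp_rw [mul_pow]
        rw [intervalIntegral.integral_const_mul,
          intervalIntegral.integral_comp_sub_right (fun s => s ^ k) t₀, sub_self,
          integral_pow, zero_pow (Nat.succ_ne_zero k)]
        have hk1 : ((k:ℝ)+1) ≠ 0 := by positivity
        have hkf : (k.factorial:ℝ) ≠ 0 := Nat.cast_ne_zero.2 k.factorial_ne_zero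
        push_cast
        field_simp
        rw [sub_zero]
      have e1 : IntervalIntegrable (fun s : ℝ =>
          M ^ p * (∑ k ∈ Finset.range n, (B * (s - t₀)) ^ k / (k.factorial:ℝ))) volume t₀ u := by
        apply Continuous.intervalIntegrable
        fun_prop
      have e2 : IntervalIntegrable (fun s : ℝ =>
          G t * ((B * (s - t₀)) ^ n / (n.factorial:ℝ))) volume t₀ u := by
        apply Continuous.intervalIntegrable
        fun_prop
      have h2 : (∫ s in t₀..u, G s) ≤ ∫ s in t₀..u,
          (M ^ p * (∑ k ∈ Finset.range n, (B * (s - t₀)) ^ k / (k.factorial:ℝ))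
            + G t * ((B * (s - t₀)) ^ n / (n.factorial:ℝ))) :=
        intervalIntegral.integral_mono_on hu.1 (hG_int u huT) (e1.add e2)
          (fun s hs => ih s ⟨hs.1, hs.2.trans hu.2⟩)
      have h3 : (∫ s in t₀..u,
          (M ^ p * (∑ k ∈ Finset.range n, (B * (s - t₀)) ^ k / (k.factorial:ℝ))
            + G t * ((B * (s - t₀)) ^ n / (n.factorial:ℝ))))
          = M ^ p * (∑ k ∈ Finset.range n,
              B ^ k * (u - t₀) ^ (k+1) / (((k:ℝ)+1) * (k.factorial:ℝ)))
            + G t * (B ^ n * (u - t₀) ^ (n+1) / (((n:ℝ)+1) * (n.factorial:ℝ))) := by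
        rw [intervalIntegral.integral_add e1 e2, intervalIntegral.integral_const_mul,
          intervalIntegral.integral_const_mul,
          intervalIntegral.integral_finset_sum (fun k _ => by
            apply Continuous.intervalIntegrable; fun_prop)]
        simp only [hIk]
      have hsum : (∑ k ∈ Finset.range (n+1), (B * (u - t₀)) ^ k / (k.factorial : ℝ))
          = 1 + B * ∑ k ∈ Finset.range n,
              B ^ k * (u - t₀) ^ (k+1) / (((k:ℝ)+1) * (k.factorial:ℝ)) := by
        rw [Finset.sum_range_succ', Finset.mul_sum]
        simp only [pow_zero, Nat.factorial_zero, Nat.cast_one, div_one]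
        rw [add_comm]
        congr 1
        refine Finset.sum_congr rfl (fun k _ => ?_)
        have hk1 : ((k:ℝ)+1) ≠ 0 := by positivity
        have hkf : (k.factorial:ℝ) ≠ 0 := Nat.cast_ne_zero.2 k.factorial_ne_zero
        rw [Nat.factorial_succ, mul_pow]
        push_cast
        field_simp
        ring
      have htail : (B * (u - t₀)) ^ (n+1) / ((n+1).factorial : ℝ)
          = B * (B ^ n * (u - t₀) ^ (n+1) / (((n:ℝ)+1) * (n.factorial:ℝ))) := by
        have hn1 : ((n:ℝ)+1) ≠ 0 := by positivity
        have hnf : (n.factorial:ℝ) ≠ 0 := Nat.cast_ne_zero.2 n.factorial_ne_zero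
        rw [Nat.factorial_succ, mul_pow]
        push_cast
        field_simp
        ring
      have h4 : F u ≤ B * ∫ s in t₀..u,
          (M ^ p * (∑ k ∈ Finset.range n, (B * (s - t₀)) ^ k / (k.factorial:ℝ))
            + G t * ((B * (s - t₀)) ^ n / (n.factorial:ℝ))) :=
        (hFle u hu).trans (mul_le_mul_of_nonneg_left h2 hB)
      have hGu : G u = M ^ p + F u := rfl
      rw [hGu, hsum, htail, h3] at *
      rw [h3] at h4
      nlinarith [h4]
  -- pass to the limit
  have hBt0 : (0:ℝ) ≤ B * (t - t₀) := mul_nonneg hB (sub_nonneg.2 ht.1)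
  have hGt : G t ≤ M ^ p * Real.exp (B * (t - t₀)) := by
    have hstep : ∀ n : ℕ, G t ≤ M ^ p * Real.exp (B * (t - t₀))
        + G t * ((B * (t - t₀)) ^ n / (n.factorial : ℝ)) := by
      intro n
      refine (main n t htt).trans (add_le_add_left ?_ _)
      exact mul_le_mul_of_nonneg_left (Real.sum_le_exp_of_nonneg hBt0 n) hMp
    have hlim : Filter.Tendsto (fun n : ℕ => M ^ p * Real.exp (B * (t - t₀))
        + G t * ((B * (t - t₀)) ^ n / (n.factorial : ℝ))) Filter.atTop
        (nhds (M ^ p * Real.exp (B * (t - t₀)) + G t * 0)) :=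
      Filter.Tendsto.add tendsto_const_nhds
        ((FloorSemiring.tendsto_pow_div_factorial_atTop (B * (t - t₀))).const_mul _)
    have := ge_of_tendsto' hlim hstep
    simpa using this
  -- conclude
  have hxt0 : 0 ≤ x t := hx_nonneg t ht
  have hFt : 0 ≤ F t := hF_nonneg t ht
  have hbt : x t ^ p ≤ 2 ^ (p-1) * (M ^ p * Real.exp (B * (t - t₀))) := by
    have h1 : x t ≤ M + F t ^ (1/p) :=
      le_trans (h_bound t ht) (add_le_add_left (hM t htt) _)
    calc x t ^ p ≤ (M + F t ^ (1/p)) ^ p := Real.rpow_le_rpow hxt0 h1 (le_of_lt hp0)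
      _ ≤ 2 ^ (p-1) * (M ^ p + (F t ^ (1/p)) ^ p) :=
          aux_add_rpow hM0 (Real.rpow_nonneg hFt _) hp
      _ = 2 ^ (p-1) * G t := by
          rw [← Real.rpow_mul hFt, one_div_mul_cancel hp0.ne', Real.rpow_one]
      _ ≤ 2 ^ (p-1) * (M ^ p * Real.exp (B * (t - t₀))) :=
          mul_le_mul_of_nonneg_left hGt (Real.rpow_nonneg (by norm_num) _)
  have hfin := Real.rpow_le_rpow (Real.rpow_nonneg hxt0 p) hbt (by positivity : (0:ℝ) ≤ 1/p)
  rw [← Real.rpow_mul hxt0, mul_one_div_cancel hp0.ne', Real.rpow_one] at hfin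
  refine hfin.trans (le_of_eq ?_)
  rw [Real.mul_rpow (Real.rpow_nonneg (by norm_num) _)
      (mul_nonneg hMp (Real.exp_pos _).le),
    Real.mul_rpow hMp (Real.exp_pos _).le,
    ← Real.rpow_mul (by norm_num : (0:ℝ) ≤ 2),
    ← Real.rpow_mul hM0, mul_one_div_cancel hp0.ne', Real.rpow_one,
    ← Real.exp_mul]
  have hexp1 : (p - 1) * (1/p) = 1 - 1/p := by field_simp
  have hexp2 : B * (t - t₀) * (1/p) = B * (t - t₀) / p := by ring
  rw [hexp1, hexp2]
  ring
end

section
/- Let $d\in\mathbb{N}$, let $\lVert\cdot\rVert$ be the Euclidean norm on $\mathbb{R}^d$, let $p\in[3/2,\infty)$, $a,c\in[0,\infty)$, and define $V\colon\mathbb{R}^d\to\mathbb{R}$ by $V(x)=(a+c^2\lVert x\rVert^2)^p$. Then for all $x,y,z\in\mathbb{R}^d$ it holds that $\lvert (\mathrm{D}^2V(x))(y,z)\rvert \le 2p(2p-1)c^2\,(V(x))^{(p-1)/p}\lVert y\rVert\,\lVert z\rVert$. -/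
open Real Filter Asymptotics

set_option maxHeartbeats 1000000 in
set_option synthInstance.maxHeartbeats 400000 in
/-- Second-derivative bound for the Lyapunov function `V x = (a + c² ‖x‖²) ^ p`. -/
theorem stmt_3 (d : ℕ) (hd : 0 < d) (p a c : ℝ) (hp : 3 / 2 ≤ p) (ha : 0 ≤ a) (hc : 0 ≤ c)
    (V : EuclideanSpace ℝ (Fin d) → ℝ)
    (hV : ∀ x, V x = (a + c ^ 2 * ‖x‖ ^ 2) ^ p) :
    ∀ x y z : EuclideanSpace ℝ (Fin d),
      |fderiv ℝ (fderiv ℝ V) x y z| ≤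
        2 * p * (2 * p - 1) * c ^ 2 * (V x) ^ ((p - 1) / p) * ‖y‖ * ‖z‖ := by
  have hp0 : (0:ℝ) < p := by linarith
  have hp1 : (1:ℝ) ≤ p := by linarith
  obtain rfl : V = fun w => (a + c ^ 2 * ‖w‖ ^ 2) ^ p := funext hV
  intro x y z
  have hg : ∀ w : EuclideanSpace ℝ (Fin d),
      HasFDerivAt (fun w : EuclideanSpace ℝ (Fin d) => a + c ^ 2 * ‖w‖ ^ 2)
        ((2 * c ^ 2) • innerSL ℝ w) w := by
    intro w
    have h1 : HasFDerivAt (fun w : EuclideanSpace ℝ (Fin d) => ‖w‖ ^ 2)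
        ((2:ℕ) • innerSL ℝ w) w := by
      have := (hasFDerivAt_id w).norm_sq
      simpa using this
    have h3 := (h1.const_mul (c ^ 2)).const_add a
    have he : (c ^ 2) • ((2:ℕ) • innerSL ℝ w) = (2 * c ^ 2) • innerSL ℝ w := by
      ext v
      simp [two_smul]
      ring
    rwa [he] at h3
  have hW : ∀ w : EuclideanSpace ℝ (Fin d),
      HasFDerivAt (fun w : EuclideanSpace ℝ (Fin d) => (a + c ^ 2 * ‖w‖ ^ 2) ^ p)
      ((2 * p * c ^ 2 * (a + c ^ 2 * ‖w‖ ^ 2) ^ (p - 1)) • innerSL ℝ w) w := by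
    intro w
    have h := (hg w).rpow_const (p := p) (Or.inr hp1)
    rw [smul_smul,
      show p * (a + c ^ 2 * ‖w‖ ^ 2) ^ (p - 1) * (2 * c ^ 2)
        = 2 * p * c ^ 2 * (a + c ^ 2 * ‖w‖ ^ 2) ^ (p - 1) by ring] at h
    exact h
  have hfd : fderiv ℝ (fun w : EuclideanSpace ℝ (Fin d) => (a + c ^ 2 * ‖w‖ ^ 2) ^ p)
      = fun w : EuclideanSpace ℝ (Fin d) =>
        (2 * p * c ^ 2 * (a + c ^ 2 * ‖w‖ ^ 2) ^ (p - 1)) • innerSL ℝ w :=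
    funext fun w => (hW w).fderiv
  rw [hfd]
  rcases eq_or_lt_of_le (by positivity : (0:ℝ) ≤ a + c ^ 2 * ‖x‖ ^ 2) with hgx | hgx
  · -- degenerate case : a + c^2 ‖x‖^2 = 0
    have hmn : (0:ℝ) ≤ c ^ 2 * ‖x‖ ^ 2 := by positivity
    have ha0 : a = 0 := by nlinarith
    have hcx : c ^ 2 * ‖x‖ ^ 2 = 0 := by nlinarith
    subst ha0
    rcases eq_or_ne c 0 with hc0 | hc0
    · subst hc0
      have hW0 : (fun w : EuclideanSpace ℝ (Fin d) =>
          (2 * p * (0:ℝ) ^ 2 * (0 + (0:ℝ) ^ 2 * ‖w‖ ^ 2) ^ (p - 1)) • innerSL ℝ w)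
          = fun _ : EuclideanSpace ℝ (Fin d) =>
            (0 : EuclideanSpace ℝ (Fin d) →L[ℝ] ℝ) := by
        funext w
        norm_num
      rw [hW0]
      simp [fderiv_const]
    · have hx0 : x = 0 := by
        have hx2 : ‖x‖ ^ 2 = 0 := by
          rcases mul_eq_zero.mp hcx with h | h
          · exact absurd h (pow_ne_zero 2 hc0)
          · exact h
        exact norm_eq_zero.mp (pow_eq_zero_iff two_ne_zero |>.mp hx2)
      subst hx0
      have h0 : HasFDerivAt (fun w : EuclideanSpace ℝ (Fin d) =>
          (2 * p * c ^ 2 * (0 + c ^ 2 * ‖w‖ ^ 2) ^ (p - 1)) • innerSL ℝ w)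
          (0 : EuclideanSpace ℝ (Fin d) →L[ℝ]
            (EuclideanSpace ℝ (Fin d) →L[ℝ] ℝ)) 0 := by
        rw [hasFDerivAt_iff_isLittleO_nhds_zero]
        simp only [zero_add, map_zero, smul_zero, sub_zero, ContinuousLinearMap.zero_apply,
          norm_zero]
        rw [Asymptotics.isLittleO_iff]
        intro ε hε
        have hexp : (0:ℝ) < 2 * p - 2 := by linarith
        have ht : Filter.Tendsto (fun h : EuclideanSpace ℝ (Fin d) =>
            2 * p * c ^ 2 * (c ^ 2) ^ (p - 1) * ‖h‖ ^ (2 * p - 2)) (nhds 0) (nhds 0) := by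
          have h1 : Filter.Tendsto (fun h : EuclideanSpace ℝ (Fin d) => ‖h‖)
              (nhds 0) (nhds (0:ℝ)) := by
            simpa using tendsto_norm_zero
          have h2 : ContinuousAt (fun t : ℝ => t ^ (2 * p - 2)) 0 :=
            Real.continuousAt_rpow_const 0 _ (Or.inr hexp.le)
          have h3 := (h2.tendsto).comp h1
          rw [Real.zero_rpow hexp.ne'] at h3
          have h4 := h3.const_mul (2 * p * c ^ 2 * (c ^ 2) ^ (p - 1))
          simpa using h4
        filter_upwards [ht.eventually_lt_const hε] with h hh
        have hnn : (0:ℝ) ≤ 2 * p * c ^ 2 * (c ^ 2 * ‖h‖ ^ 2) ^ (p - 1) := by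
          exact mul_nonneg (mul_nonneg (by linarith) (sq_nonneg c))
            (Real.rpow_nonneg (by positivity) (p - 1))
        have hsc : 2 * p * c ^ 2 * (c ^ 2 * ‖h‖ ^ 2) ^ (p - 1)
            = 2 * p * c ^ 2 * (c ^ 2) ^ (p - 1) * ‖h‖ ^ (2 * p - 2) := by
          rw [Real.mul_rpow (sq_nonneg c) (sq_nonneg ‖h‖),
            ← Real.rpow_natCast ‖h‖ 2, ← Real.rpow_mul (norm_nonneg h),
            show ((2:ℕ):ℝ) * (p - 1) = 2 * p - 2 by push_cast; ring]
          ring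
        refine le_trans (ContinuousLinearMap.opNorm_smul_le _ _) ?_
        rw [innerSL_apply_norm, Real.norm_eq_abs, abs_of_nonneg hnn, hsc]
        exact mul_le_mul_of_nonneg_right hh.le (norm_nonneg h)
      rw [h0.fderiv]
      have hr : ((0:ℝ) + c ^ 2 * ‖(0:EuclideanSpace ℝ (Fin d))‖ ^ 2) ^ p = 0 := by
        rw [show ((0:ℝ) + c ^ 2 * ‖(0:EuclideanSpace ℝ (Fin d))‖ ^ 2) = 0 by simp]
        exact Real.zero_rpow hp0.ne'
      simp only [hr, ContinuousLinearMap.zero_apply, abs_zero,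
        Real.zero_rpow (div_ne_zero (by linarith : p - 1 ≠ 0) hp0.ne')]
      simp
  · have h1 : HasFDerivAt (fun w : EuclideanSpace ℝ (Fin d) =>
        2 * p * c ^ 2 * (a + c ^ 2 * ‖w‖ ^ 2) ^ (p - 1))
        ((4 * p * (p-1) * c ^ 4 * (a + c ^ 2 * ‖x‖ ^ 2) ^ (p - 2)) • innerSL ℝ x) x := by
      have h := ((hg x).rpow_const (p := p - 1) (Or.inl hgx.ne')).const_mul (2 * p * c ^ 2)
      rw [smul_smul, smul_smul, show p - 1 - 1 = p - 2 by ring,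
        show 2 * p * c ^ 2 * ((p - 1) * (a + c ^ 2 * ‖x‖ ^ 2) ^ (p - 2)) * (2 * c ^ 2)
          = 4 * p * (p-1) * c ^ 4 * (a + c ^ 2 * ‖x‖ ^ 2) ^ (p - 2) by ring] at h
      exact h
    have h2 : HasFDerivAt (fun w : EuclideanSpace ℝ (Fin d) => innerSL ℝ w)
        (innerSL ℝ (E := EuclideanSpace ℝ (Fin d))) x := (innerSL ℝ).hasFDerivAt
    have h3 : HasFDerivAt (fun w : EuclideanSpace ℝ (Fin d) =>
        (2 * p * c ^ 2 * (a + c ^ 2 * ‖w‖ ^ 2) ^ (p - 1)) • innerSL ℝ w) _ x := h1.smul h2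
    rw [h3.fderiv]
    simp only [ContinuousLinearMap.add_apply, ContinuousLinearMap.smul_apply,
      ContinuousLinearMap.smulRight_apply, innerSL_apply_apply, smul_eq_mul]
    have hVx : ((a + c ^ 2 * ‖x‖ ^ 2) ^ p) ^ ((p - 1) / p)
        = (a + c ^ 2 * ‖x‖ ^ 2) ^ (p - 1) := by
      rw [← Real.rpow_mul hgx.le, show p * ((p - 1) / p) = p - 1 by field_simp]
    rw [hVx]
    set g := a + c ^ 2 * ‖x‖ ^ 2 with hgdef
    have hgp1 : (0:ℝ) ≤ g ^ (p - 1) := Real.rpow_nonneg hgx.le _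
    have hgp2 : (0:ℝ) ≤ g ^ (p - 2) := Real.rpow_nonneg hgx.le _
    have hA : (0:ℝ) ≤ 2 * p * c ^ 2 * g ^ (p - 1) := by positivity
    have hB : (0:ℝ) ≤ 4 * p * (p - 1) * c ^ 4 * g ^ (p - 2) := by
      have h14 : (0:ℝ) ≤ 4 * p * (p - 1) * c ^ 4 :=
        mul_nonneg (mul_nonneg (mul_nonneg (by norm_num) hp0.le) (by linarith)) (by positivity)
      exact mul_nonneg h14 hgp2
    have key : 4 * p * (p - 1) * c ^ 4 * g ^ (p - 2) * (‖x‖ * ‖x‖)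
        ≤ 4 * p * (p - 1) * c ^ 2 * g ^ (p - 1) := by
      have h4 : g ^ (p - 2) * g = g ^ (p - 1) := by
        rw [← Real.rpow_add_one hgx.ne' (p - 2), show p - 2 + 1 = p - 1 by ring]
      have h5 : c ^ 2 * (‖x‖ * ‖x‖) ≤ g := by nlinarith [sq_nonneg ‖x‖]
      have h6 : (0:ℝ) ≤ 4 * p * (p - 1) * c ^ 2 * g ^ (p - 2) :=
        mul_nonneg (mul_nonneg (mul_nonneg (mul_nonneg (by norm_num) hp0.le) (by linarith))
          (sq_nonneg c)) hgp2
      have key0 : 4 * p * (p - 1) * c ^ 4 * g ^ (p - 2) * (‖x‖ * ‖x‖)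
          ≤ 4 * p * (p - 1) * c ^ 2 * (g ^ (p - 2) * g) := by
        nlinarith [mul_le_mul_of_nonneg_left h5 h6]
      rwa [h4] at key0
    have main : |2 * p * c ^ 2 * g ^ (p - 1) * inner ℝ y z +
          4 * p * (p - 1) * c ^ 4 * g ^ (p - 2) * inner ℝ x y * inner ℝ x z|
        ≤ 2 * p * c ^ 2 * g ^ (p - 1) * (‖y‖ * ‖z‖) +
          4 * p * (p - 1) * c ^ 4 * g ^ (p - 2) * ((‖x‖ * ‖y‖) * (‖x‖ * ‖z‖)) := by
      have e1 := abs_real_inner_le_norm y z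
      have e2 := abs_real_inner_le_norm x y
      have e3 := abs_real_inner_le_norm x z
      have t1 : |2 * p * c ^ 2 * g ^ (p - 1) * inner ℝ y z|
          ≤ 2 * p * c ^ 2 * g ^ (p - 1) * (‖y‖ * ‖z‖) := by
        rw [abs_mul, abs_of_nonneg hA]
        exact mul_le_mul_of_nonneg_left e1 hA
      have t2 : |4 * p * (p - 1) * c ^ 4 * g ^ (p - 2) * inner ℝ x y * inner ℝ x z|
          ≤ 4 * p * (p - 1) * c ^ 4 * g ^ (p - 2) * ((‖x‖ * ‖y‖) * (‖x‖ * ‖z‖)) := by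
        rw [abs_mul, abs_mul, abs_of_nonneg hB, mul_assoc]
        exact mul_le_mul_of_nonneg_left
          (mul_le_mul e2 e3 (abs_nonneg _) (by positivity)) hB
      exact (abs_add_le _ _).trans (add_le_add t1 t2)
    refine main.trans ?_
    have hyz : (0:ℝ) ≤ ‖y‖ * ‖z‖ := mul_nonneg (norm_nonneg _) (norm_nonneg _)
    nlinarith [mul_le_mul_of_nonneg_right key hyz]
end

section
/- Let $d\in\mathbb{N}$, $p\in[2,\infty)$, $\bar{c}\in(0,\infty)$, let $\lVert\cdot\rVert$ denote Euclidean/Frobenius norms, let $V\in C^2(\mathbb{R}^d,[1,\infty))$ satisfy for all $x,y\in\mathbb{R}^d$ that $\lvert(\mathrm{D}V(x))(y)\rvert\le\bar{c}(V(x))^{(p-1)/p}\lVert y\rVert$ and $\lvert(\mathrm{D}^2V(x))(y,y)\rvert\le\bar{c}(V(x))^{(p-2)/p}\lVert y\rVert^2$, and let $\mu\colon\mathbb{R}^d\to\mathbb{R}^d$, $\sigma=(\sigma_1,\dots,\sigma_m)\colon\mathbb{R}^d\to\mathbb{R}^{d\times m}$ satisfy $\max\{\lVert\mu(x)\rVert,\lVert\sigma(x)\rVert\}\le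 (V(x))^{1/p}$ for all $x$. Then for all $x,y\in\mathbb{R}^d$ it holds that $\lvert(\mathrm{D}V(y))(\mu(x))\rvert+\tfrac12\bigl\lvert\sum_{k=1}^m(\mathrm{D}^2V(y))(\sigma_k(x),\sigma_k(x))\bigr\rvert \le \bigl(1.5\bar{c}-\tfrac{2\bar{c}}{p}\bigr)V(y)+\tfrac{2\bar{c}}{p}V(x)$. -/
open Finset

/-- Generator-type bound for the Lyapunov function `V`. Here `σ x k` denotes the
`k`-th column of the diffusion matrix, so that `∑ k, ‖σ x k‖²` is the squared
Frobenius norm of `σ x`. -/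
theorem stmt_7 (d m : ℕ) (hd : 0 < d) (hm : 0 < m) (p cbar : ℝ)
    (hp : 2 ≤ p) (hcbar : 0 < cbar)
    (V : EuclideanSpace ℝ (Fin d) → ℝ) (hV : ContDiff ℝ 2 V)
    (hV1 : ∀ x, 1 ≤ V x)
    (hDV : ∀ x y : EuclideanSpace ℝ (Fin d),
      |fderiv ℝ V x y| ≤ cbar * (V x) ^ ((p - 1) / p) * ‖y‖)
    (hD2V : ∀ x y : EuclideanSpace ℝ (Fin d),
      |fderiv ℝ (fderiv ℝ V) x y y| ≤ cbar * (V x) ^ ((p - 2) / p) * ‖y‖ ^ 2)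
    (μ : EuclideanSpace ℝ (Fin d) → EuclideanSpace ℝ (Fin d))
    (σ : EuclideanSpace ℝ (Fin d) → Fin m → EuclideanSpace ℝ (Fin d))
    (hgrowth : ∀ x, max ‖μ x‖ (Real.sqrt (∑ k, ‖σ x k‖ ^ 2)) ≤ (V x) ^ (1 / p)) :
    ∀ x y : EuclideanSpace ℝ (Fin d),
      |fderiv ℝ V y (μ x)| + 1 / 2 * |∑ k, fderiv ℝ (fderiv ℝ V) y (σ x k) (σ x k)| ≤
        (1.5 * cbar - 2 * cbar / p) * V y + (2 * cbar / p) * V x := by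
  intro x y
  have hp0 : (0:ℝ) < p := by linarith
  have ha : (0:ℝ) < V y := lt_of_lt_of_le one_pos (hV1 y)
  have hb : (0:ℝ) < V x := lt_of_lt_of_le one_pos (hV1 x)
  have hμ : ‖μ x‖ ≤ (V x) ^ (1 / p) :=
    le_trans (le_max_left _ _) (hgrowth x)
  have hS0 : (0:ℝ) ≤ ∑ k, ‖σ x k‖ ^ 2 :=
    Finset.sum_nonneg fun k _ => sq_nonneg _
  have hS : (∑ k, ‖σ x k‖ ^ 2) ≤ (V x) ^ (2 / p) := by
    have h1 : Real.sqrt (∑ k, ‖σ x k‖ ^ 2) ≤ (V x) ^ (1 / p) :=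
      le_trans (le_max_right _ _) (hgrowth x)
    have h2 : (∑ k, ‖σ x k‖ ^ 2) = (Real.sqrt (∑ k, ‖σ x k‖ ^ 2)) ^ 2 :=
      (Real.sq_sqrt hS0).symm
    have h3 : (Real.sqrt (∑ k, ‖σ x k‖ ^ 2)) ^ 2 ≤ ((V x) ^ (1 / p)) ^ 2 :=
      pow_le_pow_left₀ (Real.sqrt_nonneg _) h1 2
    have h4 : ((V x) ^ (1 / p)) ^ 2 = (V x) ^ (2 / p) := by
      rw [← Real.rpow_natCast ((V x) ^ (1 / p)) 2, ← Real.rpow_mul hb.le]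
      norm_num
      rw [mul_comm]
      rfl
    rw [h2, ← h4]; exact h3
  -- first term
  have hT1 : |fderiv ℝ V y (μ x)| ≤
      cbar * ((V y) ^ ((p - 1) / p) * (V x) ^ (1 / p)) := by
    calc |fderiv ℝ V y (μ x)| ≤ cbar * (V y) ^ ((p - 1) / p) * ‖μ x‖ := hDV y (μ x)
      _ ≤ cbar * (V y) ^ ((p - 1) / p) * ((V x) ^ (1 / p)) := by
          apply mul_le_mul_of_nonneg_left hμ
          positivity
      _ = cbar * ((V y) ^ ((p - 1) / p) * (V x) ^ (1 / p)) := by ring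
  -- second term
  have hT2 : |∑ k, fderiv ℝ (fderiv ℝ V) y (σ x k) (σ x k)| ≤
      cbar * ((V y) ^ ((p - 2) / p) * (V x) ^ (2 / p)) := by
    calc |∑ k, fderiv ℝ (fderiv ℝ V) y (σ x k) (σ x k)|
        ≤ ∑ k, |fderiv ℝ (fderiv ℝ V) y (σ x k) (σ x k)| := Finset.abs_sum_le_sum_abs _ _
      _ ≤ ∑ k, cbar * (V y) ^ ((p - 2) / p) * ‖σ x k‖ ^ 2 :=
          Finset.sum_le_sum fun k _ => hD2V y (σ x k)
      _ = cbar * (V y) ^ ((p - 2) / p) * (∑ k, ‖σ x k‖ ^ 2) := by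
          rw [← Finset.mul_sum]
      _ ≤ cbar * (V y) ^ ((p - 2) / p) * ((V x) ^ (2 / p)) := by
          apply mul_le_mul_of_nonneg_left hS
          positivity
      _ = cbar * ((V y) ^ ((p - 2) / p) * (V x) ^ (2 / p)) := by ring
  -- Young inequalities
  have hy1 : (V y) ^ ((p - 1) / p) * (V x) ^ (1 / p) ≤
      (p - 1) / p * V y + 1 / p * V x := by
    apply Real.geom_mean_le_arith_mean2_weighted
      (div_nonneg (by linarith) hp0.le) (by positivity) ha.le hb.le
    field_simp
    ring
  have hy2 : (V y) ^ ((p - 2) / p) * (V x) ^ (2 / p) ≤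
      (p - 2) / p * V y + 2 / p * V x := by
    apply Real.geom_mean_le_arith_mean2_weighted
      (div_nonneg (by linarith) hp0.le) (by positivity) ha.le hb.le
    field_simp
    ring
  have h1 : |fderiv ℝ V y (μ x)| ≤ cbar * ((p - 1) / p * V y + 1 / p * V x) :=
    hT1.trans (mul_le_mul_of_nonneg_left hy1 hcbar.le)
  have h2 : |∑ k, fderiv ℝ (fderiv ℝ V) y (σ x k) (σ x k)| ≤
      cbar * ((p - 2) / p * V y + 2 / p * V x) :=
    hT2.trans (mul_le_mul_of_nonneg_left hy2 hcbar.le)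
  have heq : cbar * ((p - 1) / p * V y + 1 / p * V x) +
      1 / 2 * (cbar * ((p - 2) / p * V y + 2 / p * V x)) =
      (1.5 * cbar - 2 * cbar / p) * V y + (2 * cbar / p) * V x := by
    field_simp
    ring
  linarith
end
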